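/- arXiv:1901.01652 — 2 statements merged into one kernel-verified Lean document; each statement's English description precedes it below -/
import Mathlib

section
/- The second mode-n unfolding of a tensor-ring-represented tensor factorizes as X_{<n>} = G_{n,(2)} (G_{≠n,<2>})ᵀ, where G_{≠n} is the subchain tensor obtained by merging all cores except the n-th. -/
open Matrix
open Fin.NatCast

variable {N : ℕ}

/-- Product `A k * A (k+1) * ⋯ * A (k+m-1)` of cyclically-indexed rectangular matrices
`A n ∈ ℝ^{R n × R (n+1)}` (indices mod `N`, so that `R (N+1) = R 1`). -/
def chainFrom [NeZero N] (r : Fin N → ℕ)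
    (A : (n : Fin N) → Matrix (Fin (r n)) (Fin (r (n + 1))) ℝ) (k : Fin N) :
    (m : ℕ) → Matrix (Fin (r k)) (Fin (r (k + (m : Fin N)))) ℝ
  | 0 => (1 : Matrix (Fin (r k)) (Fin (r k)) ℝ).submatrix id (Fin.cast (congrArg r (by simp)))
  | m + 1 => ((chainFrom r A k m) * A (k + (m : Fin N))).submatrix id
      (Fin.cast (congrArg r (by open Fin.CommRing in (push_cast; ring))))

/-- Trace of the full cyclic chain product `A k * A (k+1) * ⋯ * A (k+N-1)`. -/
def trChainAt [NeZero N] (r : Fin N → ℕ)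
    (A : (n : Fin N) → Matrix (Fin (r n)) (Fin (r (n + 1))) ℝ) (k : Fin N) : ℝ :=
  ∑ i : Fin (r k), chainFrom r A k N i (Fin.cast (congrArg r (by simp)) i)

section
open Fin.CommRing
variable [NeZero N] (r : Fin N → ℕ) (A : (n : Fin N) → Matrix (Fin (r n)) (Fin (r (n + 1))) ℝ)

lemma chainFrom_congr {k k' : Fin N} (h : k = k') (m : ℕ) (i : Fin (r k)) (j : Fin (r (k + m))) :
    chainFrom r A k m i j
      = chainFrom r A k' m (Fin.cast (by rw [h]) i) (Fin.cast (by rw [h]) j) := by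
  subst h; rfl

lemma A_congr {k k' : Fin N} (h : k = k') (i : Fin (r k)) (j : Fin (r (k + 1))) :
    A k i j = A k' (Fin.cast (by rw [h]) i) (Fin.cast (by rw [h]) j) := by
  subst h; rfl

lemma chainFrom_zero (k : Fin N) (i : Fin (r k)) (j : Fin (r (k + ((0:ℕ) : Fin N)))) :
    chainFrom r A k 0 i j = if (i : ℕ) = (j : ℕ) then 1 else 0 := by
  simp [chainFrom, Matrix.one_apply, Fin.ext_iff]

lemma chainFrom_succ (k : Fin N) (m : ℕ) (i : Fin (r k)) (j : Fin (r (k + ((m+1:ℕ) : Fin N)))) :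
    chainFrom r A k (m+1) i j
      = ∑ y : Fin (r (k + (m : Fin N))), chainFrom r A k m i y *
          A (k + (m : Fin N)) y (Fin.cast (congrArg r (by push_cast; ring)) j) := by
  simp [chainFrom, Matrix.mul_apply]
end

section
open Fin.CommRing
variable [NeZero N] (r : Fin N → ℕ) (A : (n : Fin N) → Matrix (Fin (r n)) (Fin (r (n + 1))) ℝ)

lemma chainFrom_zero' (k : Fin N) (i : Fin (r k)) (j : Fin (r (k + ((0:ℕ) : Fin N)))) :
    chainFrom r A k 0 i j
      = if j = Fin.cast (congrArg r (by simp)) i then 1 else 0 := by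
  simp [chainFrom, Matrix.one_apply, Fin.ext_iff, eq_comm]

lemma chainFrom_zero'' (k : Fin N) (i : Fin (r k)) (j : Fin (r (k + ((0:ℕ) : Fin N)))) :
    chainFrom r A k 0 i j
      = if i = Fin.cast (congrArg r (by simp)) j then 1 else 0 := by
  simp [chainFrom, Matrix.one_apply, Fin.ext_iff]

lemma chainFrom_succ_left (m : ℕ) (k : Fin N) (i : Fin (r k))
    (j : Fin (r (k + ((m+1:ℕ) : Fin N)))) :
    chainFrom r A k (m+1) i j
      = ∑ x : Fin (r (k+1)), A k i x *
          chainFrom r A (k+1) m x (Fin.cast (congrArg r (by push_cast; ring)) j) := by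
  induction m with
  | zero =>
      rw [chainFrom_succ]
      conv_lhs => simp only [chainFrom_zero', ite_mul, one_mul, zero_mul,
        Finset.sum_ite_eq', Finset.mem_univ, if_true]
      conv_rhs => simp only [chainFrom_zero'', mul_ite, mul_one, mul_zero,
        Finset.sum_ite_eq', Finset.mem_univ, if_true]
      exact A_congr r A (show k + ((0:ℕ) : Fin N) = k by simp) _ _
  | succ m ih =>
      have h : k + ((m+1:ℕ) : Fin N) = (k+1) + ((m:ℕ) : Fin N) := by push_cast; ring
      rw [chainFrom_succ]
      simp only [ih]
      simp only [chainFrom_succ r A (k+1) m]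
      simp only [Finset.sum_mul, Finset.mul_sum]
      rw [Finset.sum_comm]
      refine Finset.sum_congr rfl fun x _ => ?_
      refine Fintype.sum_equiv (finCongr (congrArg r h)) _ _ fun y => ?_
      rw [mul_assoc, A_congr r A h y]
      rfl
end


section
open Fin.CommRing
variable [NeZero N] (r : Fin N → ℕ) (A : (n : Fin N) → Matrix (Fin (r n)) (Fin (r (n + 1))) ℝ)

lemma chainFrom_m_congr (k : Fin N) {m m' : ℕ} (h : m = m') (i : Fin (r k))
    (j : Fin (r (k + m))) :
    chainFrom r A k m i j = chainFrom r A k m' i (Fin.cast (by rw [h]) j) := by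
  subst h; rfl

lemma hNsub : N - 1 + 1 = N := Nat.succ_pred_eq_of_pos (Nat.pos_of_neZero N)

lemma hcyc (k : Fin N) : (k + 1) + ((N - 1 : ℕ) : Fin N) = k := by
  have hN : ((N - 1 : ℕ) : Fin N) + 1 = 0 := by
    have h1 : (1 : Fin N) = ((1 : ℕ) : Fin N) := by simp
    rw [h1, ← Nat.cast_add, hNsub, Fin.natCast_self]
  rw [add_assoc, add_comm (1 : Fin N), hN, add_zero]

lemma trChainAt_eq (k : Fin N) :
    trChainAt r A k
      = ∑ i : Fin (r k), ∑ x : Fin (r (k + 1)),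
          A k i x * chainFrom r A (k + 1) (N - 1) x
            (Fin.cast (congrArg r (hcyc k).symm) i) := by
  unfold trChainAt
  refine Finset.sum_congr rfl fun i _ => ?_
  rw [chainFrom_m_congr r A k (hNsub (N := N)).symm,
    chainFrom_succ_left r A (N - 1) k]
  rfl

lemma trChainAt_shift (k : Fin N) : trChainAt r A k = trChainAt r A (k + 1) := by
  rw [trChainAt_eq]
  unfold trChainAt
  simp only [chainFrom_m_congr r A (k+1) (hNsub (N := N)).symm,
    chainFrom_succ r A (k+1) (N-1)]
  rw [Finset.sum_comm]
  refine Finset.sum_congr rfl fun x _ => ?_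
  refine Fintype.sum_equiv (finCongr (congrArg r (hcyc k)).symm) _ _ fun y => ?_
  rw [mul_comm, A_congr r A (hcyc k) (finCongr (congrArg r (hcyc k)).symm y)]
  rfl

lemma trChainAt_const (k : Fin N) : trChainAt r A 0 = trChainAt r A k := by
  have key : ∀ j : ℕ, trChainAt r A 0 = trChainAt r A ((j : ℕ) : Fin N) := by
    intro j
    induction j with
    | zero => simp
    | succ j ih =>
        rw [ih, trChainAt_shift]
        norm_cast
  have := key k.val
  rwa [Fin.cast_val_eq_self] at this
end

/-- The tensor represented by a tensor-ring decomposition with cores `G`: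
`X(i₁,…,i_N) = Trace (G₁(i₁) ⋯ G_N(i_N))`. -/
def TRtensor (I : Fin N → ℕ) [NeZero N] (r : Fin N → ℕ)
    (G : (n : Fin N) → Fin (I n) → Matrix (Fin (r n)) (Fin (r (n + 1))) ℝ)
    (idx : ∀ n, Fin (I n)) : ℝ :=
  trChainAt r (fun n => G n (idx n)) 0

/-- the second mode-`n` unfolding of a TR-represented tensor factorizes as
`X_{<n>} = G_{n,(2)} (G_{≠n,<2>})ᵀ`: entrywise, `X(i₁,…,i_N)` equals the sum over
`(a,b) ∈ Fin Rₙ × Fin R_{n+1}` of `Gₙ(iₙ)(a,b)` times the `(b,a)` entry of the subchain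
`G_{n+1}(i_{n+1}) ⋯ G_{n-1}(i_{n-1})`. -/
theorem tr_second_unfolding [NeZero N] (I r : Fin N → ℕ)
    (G : (n : Fin N) → Fin (I n) → Matrix (Fin (r n)) (Fin (r (n + 1))) ℝ)
    (n : Fin N) (idx : ∀ m, Fin (I m)) :
    TRtensor I r G idx
      = ∑ a : Fin (r n), ∑ b : Fin (r (n + 1)),
          G n (idx n) a b *
            chainFrom r (fun m => G m (idx m)) (n + 1) (N - 1) b
              (Fin.cast (congrArg r (by
                have hN : ((N - 1 : ℕ) : Fin N) + 1 = 0 := by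
                  have h1 : (1 : Fin N) = ((1 : ℕ) : Fin N) := by simp
                  rw [h1, ← Nat.cast_add,
                    show N - 1 + 1 = N from Nat.succ_pred_eq_of_pos (Nat.pos_of_neZero N),
                    Fin.natCast_self]
                have : n + 1 + ((N - 1 : ℕ) : Fin N) = n := by
                  rw [add_assoc, add_comm (1 : Fin N), hN, add_zero]
                exact this.symm)) a) := by
  unfold TRtensor
  rw [trChainAt_const r (fun m => G m (idx m)) n, trChainAt_eq]
end

section
/- If P = X ×₁ Q₁Q₁ᵀ ×₂ ⋯ ×_N Q_NQ_Nᵀ where each Qₙ has orthonormal columns, then ‖X − P‖_F² ≤ Σₙ ‖X ×ₙ (I − QₙQₙᵀ)‖_F², i.e., the multilinear projection error is bounded by the sum of the single-mode projection errors. -/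
open Matrix

variable {N : ℕ}

/-- Mode-`n` product of a tensor `X ∈ ℝ^{I₁×⋯×I_N}` with a matrix `A ∈ ℝ^{J×Iₙ}`:
`(X ×ₙ A)(i₁,…,j,…,i_N) = Σ_{iₙ} A(j,iₙ) X(i₁,…,iₙ,…,i_N)`. -/
def modeProd {I : Fin N → ℕ} (X : (∀ n, Fin (I n)) → ℝ) (n : Fin N) {J : ℕ}
    (A : Matrix (Fin J) (Fin (I n)) ℝ) :
    (∀ m, Fin (Function.update I n J m)) → ℝ :=
  fun idx => ∑ i : Fin (I n),
    A (Fin.cast (by simp) (idx n)) i *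
      X (fun m => if h : m = n then Fin.cast (congrArg I h).symm i
        else Fin.cast (by simp [Function.update_of_ne h]) (idx m))

/-- Frobenius norm of a tensor: `‖X‖_F = sqrt (Σ X(i₁,…,i_N)²)`. -/
noncomputable def froT {I : Fin N → ℕ} (X : (∀ n, Fin (I n)) → ℝ) : ℝ :=
  Real.sqrt (∑ idx : ∀ n, Fin (I n), (X idx) ^ 2)

/-- Multilinear (all-modes) product `Y ×₁ Q₁ ×₂ ⋯ ×_N Q_N`:
`(Y ×₁ Q₁ ⋯ ×_N Q_N)(i₁,…,i_N) = Σ_{j₁,…,j_N} (∏ₙ Qₙ(iₙ,jₙ)) Y(j₁,…,j_N)`. -/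
def allModeProd {K I : Fin N → ℕ} (Y : (∀ n, Fin (K n)) → ℝ)
    (Q : (n : Fin N) → Matrix (Fin (I n)) (Fin (K n)) ℝ) :
    (∀ n, Fin (I n)) → ℝ :=
  fun idx => ∑ j : ∀ n, Fin (K n), (∏ n, Q n (idx n) (j n)) * Y j

namespace TRPaux

variable {I : Fin N → ℕ}

def dotT (X Y : (∀ n, Fin (I n)) → ℝ) : ℝ := ∑ idx, X idx * Y idx

lemma amp_comp (X : (∀ n, Fin (I n)) → ℝ)
    (A B : ∀ n, Matrix (Fin (I n)) (Fin (I n)) ℝ) :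
    allModeProd X (fun n => A n * B n) = allModeProd (allModeProd X B) A := by
  funext idx
  simp only [allModeProd, Finset.mul_sum, Finset.sum_mul]
  rw [Finset.sum_comm]
  refine Finset.sum_congr rfl fun k _ => ?_
  simp only [Matrix.mul_apply, Finset.prod_univ_sum]
  rw [Finset.sum_mul]
  refine Finset.sum_congr rfl fun j _ => ?_
  rw [Finset.prod_mul_distrib]
  ring

lemma amp_one (X : (∀ n, Fin (I n)) → ℝ) :
    allModeProd X (fun n => (1 : Matrix (Fin (I n)) (Fin (I n)) ℝ)) = X := by
  funext idx
  simp only [allModeProd]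
  rw [Fintype.sum_eq_single idx]
  · simp [Matrix.one_apply]
  · intro j hj
    obtain ⟨m, hm⟩ : ∃ m, idx m ≠ j m := by
      by_contra h
      push_neg at h
      exact hj (funext fun m => (h m).symm)
    rw [Finset.prod_eq_zero (Finset.mem_univ m)]
    · ring
    · simp [Matrix.one_apply, hm]

end TRPaux

namespace TRPaux
variable {I : Fin N → ℕ}

lemma amp_slot_sub (X : (∀ n, Fin (I n)) → ℝ)
    (A A' A'' : ∀ n, Matrix (Fin (I n)) (Fin (I n)) ℝ) (k : Fin N)
    (h : ∀ m, m ≠ k → A'' m = A m ∧ A' m = A m) (hk : A'' k = A k - A' k) :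
    allModeProd X A'' = fun idx => allModeProd X A idx - allModeProd X A' idx := by
  funext idx
  simp only [allModeProd, ← Finset.sum_sub_distrib, ← sub_mul]
  refine Finset.sum_congr rfl fun j _ => ?_
  congr 1
  rw [← Finset.mul_prod_erase _ _ (Finset.mem_univ k),
      ← Finset.mul_prod_erase _ _ (Finset.mem_univ k),
      ← Finset.mul_prod_erase _ _ (Finset.mem_univ k)]
  have he : ∀ f g : Fin N → ℝ, (∀ m ∈ Finset.univ.erase k, f m = g m) →
      ∏ m ∈ Finset.univ.erase k, f m = ∏ m ∈ Finset.univ.erase k, g m :=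
    fun f g => Finset.prod_congr rfl
  rw [he (fun m => A'' m (idx m) (j m)) (fun m => A m (idx m) (j m))
      (fun m hm => by show A'' m (idx m) (j m) = A m (idx m) (j m); rw [(h m (Finset.ne_of_mem_erase hm)).1]),
    he (fun m => A' m (idx m) (j m)) (fun m => A m (idx m) (j m))
      (fun m hm => by show A' m (idx m) (j m) = A m (idx m) (j m); rw [(h m (Finset.ne_of_mem_erase hm)).2])]
  rw [hk]
  simp [Matrix.sub_apply, sub_mul]

lemma amp_slot_zero (X : (∀ n, Fin (I n)) → ℝ)
    (A : ∀ n, Matrix (Fin (I n)) (Fin (I n)) ℝ) (k : Fin N) (hk : A k = 0) :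
    allModeProd X A = 0 := by
  funext idx
  simp only [allModeProd]
  rw [Finset.sum_eq_zero, Pi.zero_apply]
  intro j _
  rw [Finset.prod_eq_zero (Finset.mem_univ k)]
  · ring
  · simp [hk]

lemma dot_amp (X Y : (∀ n, Fin (I n)) → ℝ)
    (A : ∀ n, Matrix (Fin (I n)) (Fin (I n)) ℝ) :
    dotT (allModeProd X A) Y = dotT X (allModeProd Y fun n => (A n)ᵀ) := by
  simp only [dotT, allModeProd, Finset.sum_mul, Finset.mul_sum]
  rw [Finset.sum_comm]
  refine Finset.sum_congr rfl fun j _ => Finset.sum_congr rfl fun idx _ => ?_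
  simp only [Matrix.transpose_apply]
  ring

lemma dot_amp_amp (X : (∀ n, Fin (I n)) → ℝ)
    (A A' : ∀ n, Matrix (Fin (I n)) (Fin (I n)) ℝ) :
    dotT (allModeProd X A) (allModeProd X A') =
      dotT X (allModeProd X fun n => (A n)ᵀ * A' n) := by
  rw [dot_amp, ← amp_comp]

lemma nsq_sub (X Y : (∀ n, Fin (I n)) → ℝ) :
    dotT (fun i => X i - Y i) (fun i => X i - Y i)
      = dotT X X - 2 * dotT X Y + dotT Y Y := by
  simp only [dotT, ← Finset.sum_sub_distrib, ← Finset.sum_add_distrib, Finset.mul_sum]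
  exact Finset.sum_congr rfl fun i _ => by ring

lemma contraction (X : (∀ n, Fin (I n)) → ℝ)
    (C : ∀ n, Matrix (Fin (I n)) (Fin (I n)) ℝ)
    (hsym : ∀ n, (C n)ᵀ = C n) (hid : ∀ n, C n * C n = C n) :
    dotT (allModeProd X C) (allModeProd X C) ≤ dotT X X := by
  have h1 : dotT (allModeProd X C) (allModeProd X C) = dotT X (allModeProd X C) := by
    rw [dot_amp_amp]
    have : (fun n => (C n)ᵀ * C n) = C := funext fun n => by rw [hsym, hid]
    rw [this]
  have h2 : (0:ℝ) ≤ dotT (fun i => X i - allModeProd X C i) (fun i => X i - allModeProd X C i) :=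
    Finset.sum_nonneg fun i _ => mul_self_nonneg _
  rw [nsq_sub, h1] at h2
  linarith

end TRPaux

namespace TRPaux
variable {I : Fin N → ℕ}

lemma amp_single (X : (∀ n, Fin (I n)) → ℝ) (n : Fin N)
    (A : Matrix (Fin (I n)) (Fin (I n)) ℝ) (idx : ∀ m, Fin (I m)) :
    allModeProd X (Function.update (fun m => (1 : Matrix (Fin (I m)) (Fin (I m)) ℝ)) n A) idx
      = ∑ i : Fin (I n), A (idx n) i * X (Function.update idx n i) := by
  simp only [allModeProd]
  rw [← Fintype.sum_equiv ((Equiv.piSplitAt n (fun m => Fin (I m))).symm)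
    (fun p => (∏ m, Function.update (fun m => (1 : Matrix (Fin (I m)) (Fin (I m)) ℝ)) n A m
      (idx m) ((Equiv.piSplitAt n (fun m => Fin (I m))).symm p m)) *
      X ((Equiv.piSplitAt n (fun m => Fin (I m))).symm p)) _ (fun p => rfl)]
  rw [Fintype.sum_prod_type]
  refine Finset.sum_congr rfl fun i _ => ?_
  rw [Finset.sum_eq_single (fun m : {m // m ≠ n} => idx m.1)]
  · have he : (Equiv.piSplitAt n (fun m => Fin (I m))).symm (i, fun m : {m // m ≠ n} => idx m.1)
        = Function.update idx n i := by
      funext m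
      rw [Equiv.piSplitAt_symm_apply]
      by_cases h : m = n
      · subst h; simp
      · simp [h, Function.update_of_ne h]
    rw [he, Finset.prod_eq_single n]
    · simp
    · intro b _ hb
      simp [Function.update_of_ne hb, Matrix.one_apply]
    · simp
  · intro r _ hr
    obtain ⟨m, hm⟩ : ∃ m : {m // m ≠ n}, r m ≠ idx m.1 := by
      by_contra h
      push_neg at h
      exact hr (funext fun m => h m)
    rw [Finset.prod_eq_zero (Finset.mem_univ m.1)]
    · ring
    · rw [Equiv.piSplitAt_symm_apply]
      simp only [Function.update_of_ne m.2, dif_neg m.2]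
      have : ¬ idx m.1 = r ⟨m.1, m.2⟩ := fun h => hm (Eq.symm h)
      simp [Matrix.one_apply, this]
  · simp

end TRPaux

namespace TRPaux
variable {I : Fin N → ℕ}

lemma update_eq (n : Fin N) (m : Fin N) : I m = Function.update I n (I n) m := by
  by_cases h : m = n
  · subst h; simp
  · simp [Function.update_of_ne h]

lemma mode_eq (X : (∀ n, Fin (I n)) → ℝ) (n : Fin N)
    (A : Matrix (Fin (I n)) (Fin (I n)) ℝ) :
    froT (modeProd X n A) ^ 2 =
      dotT (allModeProd X (Function.update (fun m => (1 : Matrix (Fin (I m)) (Fin (I m)) ℝ)) n A))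
        (allModeProd X (Function.update (fun m => (1 : Matrix (Fin (I m)) (Fin (I m)) ℝ)) n A)) := by
  rw [froT, Real.sq_sqrt (Finset.sum_nonneg fun i _ => sq_nonneg _)]
  rw [← Fintype.sum_equiv (Equiv.piCongrRight fun m => finCongr (update_eq n m))
    (fun idx => (modeProd X n A ((Equiv.piCongrRight fun m => finCongr (update_eq n m)) idx)) ^ 2)
    _ (fun idx => rfl)]
  simp only [dotT]
  refine Finset.sum_congr rfl fun idx _ => ?_
  have key : modeProd X n A ((Equiv.piCongrRight fun m => finCongr (update_eq n m)) idx)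
      = ∑ i : Fin (I n), A (idx n) i * X (Function.update idx n i) := by
    simp only [modeProd]
    refine Finset.sum_congr rfl fun i _ => ?_
    have h1 : (Fin.cast (by simp) (((Equiv.piCongrRight fun m => finCongr (update_eq (I:=I) n m)) idx) n) : Fin (I n)) = idx n :=
      Fin.ext (by simp)
    have h2 : (fun m => if h : m = n then Fin.cast (congrArg I h).symm i
        else Fin.cast (by simp [Function.update_of_ne h]) (((Equiv.piCongrRight fun m => finCongr (update_eq (I:=I) n m)) idx) m))
        = Function.update idx n i := by
      funext m
      by_cases h : m = n
      · subst h
        simp only [dif_pos rfl, Function.update_self]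
        exact Fin.ext (by simp)
      · simp only [dif_neg h, Function.update_of_ne h]
        exact Fin.ext (by simp)
    rw [h1, h2]
  rw [key, ← amp_single]
  ring

end TRPaux

namespace TRPaux
variable {I : Fin N → ℕ}

lemma dot_sum {α : Type*} [Fintype α] (f g : α → ((∀ n, Fin (I n)) → ℝ)) :
    dotT (∑ a, f a) (∑ b, g b) = ∑ a, ∑ b, dotT (f a) (g b) := by
  simp only [dotT, Finset.sum_apply, Finset.sum_mul_sum]
  rw [Finset.sum_comm]
  exact Finset.sum_congr rfl fun a _ => Finset.sum_comm

variable {K : Fin N → ℕ}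

def Pm (Q : (n : Fin N) → Matrix (Fin (I n)) (Fin (K n)) ℝ) (n : Fin N) :
    Matrix (Fin (I n)) (Fin (I n)) ℝ := Q n * (Q n)ᵀ

def Am (Q : (n : Fin N) → Matrix (Fin (I n)) (Fin (K n)) ℝ) (k : ℕ) (m : Fin N) :
    Matrix (Fin (I m)) (Fin (I m)) ℝ := if (m:ℕ) < k then Pm Q m else 1

def Bm (Q : (n : Fin N) → Matrix (Fin (I n)) (Fin (K n)) ℝ) (n m : Fin N) :
    Matrix (Fin (I m)) (Fin (I m)) ℝ :=
  if (m:ℕ) < (n:ℕ) then Pm Q m else if m = n then 1 - Pm Q m else 1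

variable (Q : (n : Fin N) → Matrix (Fin (I n)) (Fin (K n)) ℝ)

lemma Pm_symm (n : Fin N) : (Pm Q n)ᵀ = Pm Q n := by
  simp [Pm, Matrix.transpose_mul]

lemma Pm_idem (hQ : ∀ n, (Q n)ᵀ * Q n = 1) (n : Fin N) : Pm Q n * Pm Q n = Pm Q n := by
  simp only [Pm]
  rw [Matrix.mul_assoc, ← Matrix.mul_assoc (Q n)ᵀ, hQ n, Matrix.one_mul]

lemma tel (X : (∀ n, Fin (I n)) → ℝ) (n : Fin N) :
    allModeProd X (Bm Q n) = allModeProd X (Am Q n) - allModeProd X (Am Q (n+1)) := by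
  have := amp_slot_sub X (Am Q n) (Am Q (n.val+1)) (Bm Q n) n ?_ ?_
  · exact this.trans rfl
  · intro m hm
    have hv : (m:ℕ) ≠ (n:ℕ) := fun h => hm (Fin.ext h)
    by_cases h : (m:ℕ) < (n:ℕ)
    · constructor <;> simp [Bm, Am, h, Nat.lt_succ_of_lt h]
    · have h2 : ¬ (m:ℕ) < (n:ℕ)+1 := by omega
      constructor <;> simp [Bm, Am, h, h2, hm]
  · simp [Bm, Am]

lemma htel (X : (∀ n, Fin (I n)) → ℝ) :
    (fun idx => X idx - allModeProd X (Pm Q) idx) = ∑ n : Fin N, allModeProd X (Bm Q n) := by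
  have h0 : allModeProd X (Am Q 0) = X := by
    have : Am Q 0 = fun m => (1 : Matrix (Fin (I m)) (Fin (I m)) ℝ) :=
      funext fun m => by simp [Am]
    rw [this, amp_one]
  have hN : allModeProd X (Am Q N) = allModeProd X (Pm Q) := by
    have : Am Q N = Pm Q := funext fun m => by simp [Am, m.isLt]
    rw [this]
  calc (fun idx => X idx - allModeProd X (Pm Q) idx)
      = allModeProd X (Am Q 0) - allModeProd X (Am Q N) := by rw [h0, hN]; rfl
    _ = ∑ k ∈ Finset.range N, (allModeProd X (Am Q k) - allModeProd X (Am Q (k+1))) :=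
        (Finset.sum_range_sub' (fun k => allModeProd X (Am Q k)) N).symm
    _ = ∑ n : Fin N, (allModeProd X (Am Q n.val) - allModeProd X (Am Q (n.val+1))) :=
        (Fin.sum_univ_eq_sum_range _ N).symm
    _ = ∑ n : Fin N, allModeProd X (Bm Q n) :=
        Finset.sum_congr rfl fun n _ => (tel Q X n).symm

lemma hoff (hQ : ∀ n, (Q n)ᵀ * Q n = 1) (X : (∀ n, Fin (I n)) → ℝ) (a b : Fin N) (hab : a ≠ b) :
    dotT (allModeProd X (Bm Q a)) (allModeProd X (Bm Q b)) = 0 := by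
  rw [dot_amp_amp]
  obtain ⟨k, hk⟩ : ∃ k, (Bm Q a k)ᵀ * Bm Q b k = 0 := by
    rcases lt_or_gt_of_ne hab with h | h
    · refine ⟨a, ?_⟩
      have h1 : (Bm Q a a)ᵀ = 1 - Pm Q a := by
        simp [Bm, Matrix.transpose_sub, Pm_symm]
      have h2 : Bm Q b a = Pm Q a := by
        simp [Bm, Fin.lt_iff_val_lt_val.mp h]
      rw [h1, h2, Matrix.sub_mul, Matrix.one_mul, Pm_idem Q hQ, sub_self]
    · refine ⟨b, ?_⟩
      have h1 : (Bm Q a b)ᵀ = Pm Q b := by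
        simp [Bm, Fin.lt_iff_val_lt_val.mp h, Pm_symm]
      have h2 : Bm Q b b = 1 - Pm Q b := by simp [Bm]
      rw [h1, h2, Matrix.mul_sub, Matrix.mul_one, Pm_idem Q hQ, sub_self]
  rw [amp_slot_zero X _ k hk]
  simp [dotT]

lemma hdiag (hQ : ∀ n, (Q n)ᵀ * Q n = 1) (X : (∀ n, Fin (I n)) → ℝ) (n : Fin N) :
    dotT (allModeProd X (Bm Q n)) (allModeProd X (Bm Q n))
      ≤ froT (modeProd X n (1 - Pm Q n)) ^ 2 := by
  set D : ∀ m, Matrix (Fin (I m)) (Fin (I m)) ℝ :=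
    Function.update (fun m => (1 : Matrix (Fin (I m)) (Fin (I m)) ℝ)) n (1 - Pm Q n) with hD
  set C : ∀ m, Matrix (Fin (I m)) (Fin (I m)) ℝ :=
    fun m => if (m:ℕ) < (n:ℕ) then Pm Q m else 1 with hC
  have hBn : Bm Q n = fun m => C m * D m := by
    funext m
    by_cases h : (m:ℕ) < (n:ℕ)
    · have hmn : m ≠ n := fun he => by simp [he] at h
      have h' : m < n := h
      simp [Bm, hC, hD, h, h', Function.update_of_ne hmn]
    · have h' : ¬ m < n := h
      by_cases h2 : m = n
      · subst h2
        simp [Bm, hC, hD, h, h']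
      · simp [Bm, hC, hD, h, h', h2, Function.update_of_ne h2]
  rw [hBn, amp_comp]
  calc dotT (allModeProd (allModeProd X D) C) (allModeProd (allModeProd X D) C)
      ≤ dotT (allModeProd X D) (allModeProd X D) := by
        refine contraction _ C (fun m => ?_) (fun m => ?_)
        · by_cases h : m < n <;> simp [hC, h, Pm_symm]
        · by_cases h : m < n <;> simp [hC, h, Pm_idem Q hQ]
    _ = froT (modeProd X n (1 - Pm Q n)) ^ 2 := (mode_eq X n (1 - Pm Q n)).symm

end TRPaux

namespace TRPaux
variable {I : Fin N → ℕ}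

lemma froT_dot (f : (∀ n, Fin (I n)) → ℝ) : froT f ^ 2 = dotT f f := by
  rw [froT, Real.sq_sqrt (Finset.sum_nonneg fun i _ => sq_nonneg _)]
  exact Finset.sum_congr rfl fun i _ => sq (f i) ▸ (pow_two (f i))

end TRPaux

/-- for the multilinear projection `P = X ×₁ Q₁Q₁ᵀ ⋯ ×_N Q_NQ_Nᵀ` with
each `Qₙ` having orthonormal columns, the projection error is bounded by the sum of the
single-mode projection errors: `‖X − P‖_F² ≤ Σₙ ‖X ×ₙ (I − QₙQₙᵀ)‖_F²`. -/
theorem trp_error_bound {I K : Fin N → ℕ} (X : (∀ n, Fin (I n)) → ℝ)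
    (Q : (n : Fin N) → Matrix (Fin (I n)) (Fin (K n)) ℝ)
    (hQ : ∀ n, (Q n)ᵀ * Q n = 1) :
    (froT (fun idx => X idx - allModeProd X (fun n => Q n * (Q n)ᵀ) idx)) ^ 2
      ≤ ∑ n : Fin N, (froT (modeProd X n (1 - Q n * (Q n)ᵀ))) ^ 2 := by
  
  have hPQ : (fun n => Q n * (Q n)ᵀ) = TRPaux.Pm Q := rfl
  rw [hPQ, TRPaux.froT_dot, TRPaux.htel Q X, TRPaux.dot_sum]
  calc ∑ a : Fin N, ∑ b : Fin N,
        TRPaux.dotT (allModeProd X (TRPaux.Bm Q a)) (allModeProd X (TRPaux.Bm Q b))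
      = ∑ a : Fin N, TRPaux.dotT (allModeProd X (TRPaux.Bm Q a)) (allModeProd X (TRPaux.Bm Q a)) :=
        Finset.sum_congr rfl fun a _ => Finset.sum_eq_single a
          (fun b _ hb => TRPaux.hoff Q hQ X a b (fun h => hb h.symm))
          (fun h => absurd (Finset.mem_univ a) h)
    _ ≤ ∑ n : Fin N, froT (modeProd X n (1 - TRPaux.Pm Q n)) ^ 2 :=
        Finset.sum_le_sum fun n _ => TRPaux.hdiag Q hQ X n
end
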